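/- Let ρ satisfy (A3), let 0 < b < 1, let ε ∈ (0, b), and let c > 0. If c > c(ε) := ε⁻¹ log(σ_{b,ε}/γ_{b,ε}), then B_CM(ε) > B_S(ε). -/

import Mathlib

open MeasureTheory ProbabilityTheory Filter Set

/-- Theorem 6.1(ii): If c > c(ε) = ε⁻¹ log(σ_{b,ε}/γ_{b,ε}), then
B_CM(ε) > B_S(ε). -/
theorem stmt10 (ρ : ℝ → ℝ)
    (hρ_meas : Measurable ρ)
    (hρ_even : ∀ u, ρ (-u) = ρ u)
    (hρ_mono : MonotoneOn ρ (Set.Ici 0))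
    (hρ_zero : ρ 0 = 0)
    (hρ_bdd : ∀ u, 0 ≤ ρ u ∧ ρ u ≤ 1)
    (hρ_lim : Tendsto ρ atTop (nhds 1))
    (g : ℝ → ℝ)
    (hg : ∀ s, 0 < s → g s = ∫ z, ρ (z / s) ∂(gaussianReal 0 1))
    (b ε : ℝ) (hε : 0 < ε) (hεb : ε < b) (hb : b < 1)
    (σbε γbε : ℝ) (hσ_pos : 0 < σbε) (hγ_pos : 0 < γbε)
    (hσ : g σbε = (b - ε) / (1 - ε)) (hγ : g γbε = b / (1 - ε))
    (c : ℝ) (hc0 : 0 < c)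
    (hcε : c > ε⁻¹ * Real.log (σbε / γbε))
    (A : ℝ → ℝ) (hA : ∀ s, A s = c * (1 - ε) * g s + Real.log s)
    (D : ℝ) (hD : D = sInf (A '' Set.Ici σbε) - sInf (A '' Set.Ici γbε))
    (BS : ℝ) (hBS : BS = Real.sqrt ((σbε / γbε) ^ 2 - 1))
    (BCM : ℝ) (hBCM : BCM = Real.sqrt (Real.exp (2 * c * ε + 2 * D) - 1)) :
    BCM > BS := by
  have hεlt1 : ε < 1 := hεb.trans hb
  -- integrability of z ↦ ρ (z / s)
  have hint : ∀ s : ℝ, Integrable (fun z => ρ (z / s)) (gaussianReal 0 1) := by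
    intro s
    have hm : AEStronglyMeasurable (fun z => ρ (z / s)) (gaussianReal 0 1) :=
      (hρ_meas.comp (measurable_id.div_const s)).aestronglyMeasurable
    refine (integrable_const (1 : ℝ)).mono' hm ?_
    filter_upwards with z
    rw [Real.norm_eq_abs, abs_le]
    exact ⟨by linarith [(hρ_bdd (z / s)).1], (hρ_bdd (z / s)).2⟩
  -- ρ (z / u) = ρ (|z| / u) and pointwise monotonicity
  have hpt : ∀ s t : ℝ, 0 < s → s ≤ t → ∀ z : ℝ, ρ (z / t) ≤ ρ (z / s) := by
    intro s t hs hst z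
    have ht : 0 < t := hs.trans_le hst
    have habs : ∀ u : ℝ, 0 < u → ρ (z / u) = ρ (|z| / u) := by
      intro u hu
      rcases le_or_gt 0 z with h | h
      · rw [abs_of_nonneg h]
      · rw [abs_of_neg h, neg_div, hρ_even]
    rw [habs s hs, habs t ht]
    have h1 : (0:ℝ) ≤ |z| / t := div_nonneg (abs_nonneg z) ht.le
    have h2 : (0:ℝ) ≤ |z| / s := div_nonneg (abs_nonneg z) hs.le
    exact hρ_mono h1 h2 (div_le_div_of_nonneg_left (abs_nonneg z) hs hst)
  -- g is antitone on positives
  have hganti : ∀ s t : ℝ, 0 < s → s ≤ t → g t ≤ g s := by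
    intro s t hs hst
    have ht : 0 < t := hs.trans_le hst
    rw [hg s hs, hg t ht]
    exact integral_mono (hint t) (hint s) (hpt s t hs hst)
  -- g nonneg
  have hgnn : ∀ s : ℝ, 0 < s → 0 ≤ g s := by
    intro s hs
    rw [hg s hs]
    exact integral_nonneg fun z => (hρ_bdd (z / s)).1
  -- γ ≤ σ
  have hγσ : γbε ≤ σbε := by
    by_contra h
    push_neg at h
    have := hganti σbε γbε hσ_pos h.le
    rw [hσ, hγ] at this
    have h1ε : 0 < 1 - ε := by linarith
    have h2 := (div_le_div_iff₀ h1ε h1ε).mp this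
    nlinarith
  -- D ≥ 0
  have hD0 : 0 ≤ D := by
    rw [hD, sub_nonneg]
    apply csInf_le_csInf
    · refine ⟨Real.log γbε, ?_⟩
      rintro x ⟨s, hs, rfl⟩
      rw [hA]
      have hs' : 0 < s := hγ_pos.trans_le hs
      have : Real.log γbε ≤ Real.log s := Real.log_le_log hγ_pos hs
      nlinarith [hgnn s hs', Real.log_le_log hγ_pos hs, mul_pos hc0 (by linarith : (0:ℝ) < 1 - ε)]
    · exact ⟨A σbε, σbε, Set.self_mem_Ici, rfl⟩
    · exact Set.image_mono (Set.Ici_subset_Ici.mpr hγσ)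
  -- main inequality
  have hratio : 1 ≤ σbε / γbε := (one_le_div hγ_pos).mpr hγσ
  have hsq : (1:ℝ) ≤ (σbε / γbε) ^ 2 := one_le_pow₀ hratio
  have hlog : Real.log ((σbε / γbε) ^ 2) = 2 * Real.log (σbε / γbε) := by
    rw [Real.log_pow]; ring
  have hkey : (σbε / γbε) ^ 2 < Real.exp (2 * c * ε + 2 * D) := by
    have h1 : Real.log (σbε / γbε) < c * ε := by
      have := (inv_mul_lt_iff₀ hε).mp (by linarith : ε⁻¹ * Real.log (σbε / γbε) < c)
      linarith [this]
    calc (σbε / γbε) ^ 2 = Real.exp (Real.log ((σbε / γbε) ^ 2)) := by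
          rw [Real.exp_log]; positivity
      _ < Real.exp (2 * c * ε + 2 * D) := by
          apply Real.exp_lt_exp.mpr
          rw [hlog]; linarith
  rw [hBS, hBCM]
  apply Real.sqrt_lt_sqrt (by linarith)
  linarith
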